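/- In a wedge, for every v and every λ ∈ (0,∞), λv is the infimum of {η·v : η > λ}. -/

import Mathlib

open scoped NNReal

/-- In a wedge, for every `v` and every `λ > 0`, `λ•v` is the infimum of `{η•v : η > λ}`. -/
theorem stmt6 {W : Type*} [PartialOrder W] [AddCommMonoid W] [Module ℝ≥0 W]
    (hle : ∀ x y : W, x ≤ y ↔ ∃ z, x + z = y)
    (hsupmul : ∀ (l : ℝ≥0) (v : W), 0 < l → IsLUB {w | ∃ η : ℝ≥0, η < l ∧ w = η • v} (l • v))
    (l : ℝ≥0) (v : W) (hl : 0 < l) :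
    IsGLB {w | ∃ η : ℝ≥0, l < η ∧ w = η • v} (l • v) := by
  constructor
  · rintro w ⟨η, hη, rfl⟩
    rw [hle]
    exact ⟨(η - l) • v, by rw [← add_smul, add_tsub_cancel_of_le hη.le]⟩
  · intro b hb
    -- b ≤ η • v for all η > l
    have key : ∀ η : ℝ≥0, η < 1 → η • b ≤ l • v := by
      intro η hη
      rcases eq_or_lt_of_le (zero_le : (0 : ℝ≥0) ≤ η) with h0 | h0
      · rw [← h0, zero_smul, hle]
        exact ⟨l • v, zero_add _⟩
      · have hb' : b ≤ (η⁻¹ * l) • v := by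
          apply hb
          refine ⟨η⁻¹ * l, ?_, rfl⟩
          have : (1 : ℝ≥0) < η⁻¹ := one_lt_inv_iff₀.mpr ⟨h0, hη⟩
          calc l = 1 * l := (one_mul l).symm
            _ < η⁻¹ * l := by exact mul_lt_mul_of_pos_right this hl
        have := (hle b ((η⁻¹ * l) • v)).mp hb'
        obtain ⟨z, hz⟩ := this
        have : η • b + η • z = η • ((η⁻¹ * l) • v) := by
          rw [← smul_add, hz]
        rw [smul_smul, ← mul_assoc, mul_inv_cancel₀ h0.ne', one_mul] at this
        rw [hle]
        exact ⟨η • z, this⟩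
    have hlub := hsupmul 1 b one_pos
    have : b ≤ l • v := by
      have := hlub.2 (fun w hw => by
        obtain ⟨η, hη, rfl⟩ := hw
        exact key η hη)
      simpa using this
    exact this
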